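/- Heisenberg principle for general information transfer: let Q ∈ B(K) be an orthogonal projection and E ∈ B(H) an orthogonal projection with E ≠ 0 and E ≠ 1. Suppose δ, Δ ∈ [0, 1/2], suppose ‖T(1 ⊗ Q) − E‖ ≤ δ, and suppose that for every orthogonal projection P ∈ B(H) one has ‖R(P) − P‖ ≤ Δ. Then (1/2 − δ)² + (1/2 − Δ)² ≤ 1/4. -/

import Mathlib

open ContinuousLinearMap

/-! The Hilbert tensor product `H ⊗ K` is modelled by a Hilbert space `L` together
with two commuting unital ⋆-homomorphisms `ι₁ : B(H) → B(L)` and `ι₂ : B(K) → B(L)`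
(playing the roles of `X ↦ X ⊗ 1` and `Y ↦ 1 ⊗ Y`). Given an isometry
`V : H → L`, the quantum operation is `T(X) = V† X V` and its restriction to the
system is `R(P) = T(ι₁ P)`. -/

variable {H K L : Type*}
  [NormedAddCommGroup H] [InnerProductSpace ℂ H] [CompleteSpace H]
  [NormedAddCommGroup K] [InnerProductSpace ℂ K] [CompleteSpace K]
  [NormedAddCommGroup L] [InnerProductSpace ℂ L] [CompleteSpace L]

/-- The quantum operation `T(X) = V† X V` in Stinespring form. -/
noncomputable def qop (V : H →L[ℂ] L) (X : L →L[ℂ] L) : H →L[ℂ] H :=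
  adjoint V ∘L X ∘L V

local notation "⟪" x ", " y "⟫" => @inner ℂ _ _ x y

/-- Rank-one operator `x ↦ ⟪ξ, x⟫ • ξ`. -/
noncomputable def rankOne (ξ : H) : H →L[ℂ] H :=
  (toSpanSingleton ℂ ξ) ∘L (innerSL ℂ ξ)

lemma rankOne_apply (ξ x : H) : rankOne ξ x = ⟪ξ, x⟫ • ξ := rfl

lemma rankOne_isSelfAdjoint (ξ : H) : IsSelfAdjoint (rankOne ξ) := by
  rw [IsSelfAdjoint, star_eq_adjoint]
  symm
  rw [eq_adjoint_iff]
  intro x y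
  simp only [rankOne_apply, inner_smul_left, inner_smul_right, inner_conj_symm]
  ring

lemma rankOne_idem (ξ : H) (h : ‖ξ‖ = 1) : IsIdempotentElem (rankOne ξ) := by
  refine ContinuousLinearMap.ext fun x => ?_
  have hξ : ⟪ξ, ξ⟫ = 1 := by
    rw [inner_self_eq_norm_sq_to_K, h]; norm_num
  simp [ContinuousLinearMap.mul_apply, rankOne_apply, inner_smul_right, hξ, smul_smul, h]

lemma rankOne_orth (ξ η : H) (h : ⟪ξ, η⟫ = 0) : rankOne ξ * rankOne η = 0 := by
  refine ContinuousLinearMap.ext fun x => ?_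
  simp [ContinuousLinearMap.mul_apply, rankOne_apply, inner_smul_right, h, smul_smul]

lemma sa_idem_norm_le_one (p : L →L[ℂ] L) (hp : IsIdempotentElem p) (hsa : IsSelfAdjoint p) :
    ‖p‖ ≤ 1 := by
  have h1 : ‖p‖ = ‖p‖ * ‖p‖ := by
    have := CStarRing.norm_star_mul_self (x := p)
    rwa [hsa.star_eq, hp.eq] at this
  nlinarith [norm_nonneg p]

lemma unit_of_inner (x : H) (h : ⟪x, x⟫ = 1) : ‖x‖ = 1 := by
  have h2 := @inner_self_eq_norm_sq ℂ H _ _ _ x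
  rw [h] at h2
  simp at h2
  nlinarith [norm_nonneg x]

lemma inner_proj_re (p : L →L[ℂ] L) (hp : IsIdempotentElem p) (hsa : IsSelfAdjoint p) (v : L) :
    Complex.re ⟪v, p v⟫ = ‖p v‖^2 := by
  have hpp : p (p v) = p v := by
    rw [← ContinuousLinearMap.mul_apply, hp.eq]
  have h1 : ⟪(adjoint p) v, p v⟫ = ⟪v, p (p v)⟫ := adjoint_inner_left p (p v) v
  rw [hsa.adjoint_eq, hpp] at h1
  rw [← h1]
  exact @inner_self_eq_norm_sq ℂ L _ _ _ (p v)

lemma proj_pyth (p : L →L[ℂ] L) (hp : IsIdempotentElem p) (hsa : IsSelfAdjoint p) (v : L) :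
    ‖v - p v‖^2 = ‖v‖^2 - ‖p v‖^2 := by
  have hre : RCLike.re ⟪v, p v⟫ = ‖p v‖^2 := inner_proj_re p hp hsa v
  have h2 := @norm_sub_sq ℂ _ _ _ _ v (p v)
  rw [h2, hre]
  ring

lemma inner_op_le {A : H →L[ℂ] H} {x y : H} (hx : ‖x‖ = 1) (hy : ‖y‖ = 1) :
    ‖⟪x, A y⟫‖ ≤ ‖A‖ := by
  calc ‖⟪x, A y⟫‖ ≤ ‖x‖ * ‖A y‖ := norm_inner_le_norm x (A y)
    _ ≤ ‖x‖ * (‖A‖ * ‖y‖) := by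
        gcongr; exact le_opNorm A y
    _ = ‖A‖ := by rw [hx, hy]; ring

lemma real_final (A B C D δ Δ : ℝ) (hA : 0 ≤ A) (hB : 0 ≤ B) (hC : 0 ≤ C) (hD : 0 ≤ D)
    (hAC : A^2 + C^2 = 1) (hBD : B^2 + D^2 = 1) (hAδ : 1 - δ ≤ A^2) (hBδ : B^2 ≤ δ)
    (hδ2 : δ ≤ 1/2) (hΔ2 : Δ ≤ 1/2) (key : 1 - 2*Δ ≤ A*B + C*D) :
    (1/2 - δ)^2 + (1/2 - Δ)^2 ≤ 1/4 := by
  have h1 : (A*B + C*D)^2 ≤ 1 - (A^2 - B^2)^2 := by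
    nlinarith [sq_nonneg (A*C - B*D)]
  have hd : 0 ≤ 1 - 2*δ := by linarith
  have h2 : (1 - 2*δ)^2 ≤ (A^2 - B^2)^2 := by
    nlinarith [mul_nonneg (by nlinarith : (0:ℝ) ≤ A^2 - B^2 - (1 - 2*δ)) (by nlinarith : (0:ℝ) ≤ A^2 - B^2 + (1 - 2*δ))]
  have h3 : 0 ≤ 1 - 2*Δ := by linarith
  have h4 : (1 - 2*Δ)^2 ≤ (A*B + C*D)^2 := by
    have hABCD : 0 ≤ A*B + C*D := by positivity
    nlinarith
  nlinarith

set_option maxHeartbeats 2000000 in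
/-- Heisenberg principle for general information transfer: if the pointer projection
`Q` reproduces the nontrivial projection `E` up to `δ`, and every projection is
disturbed by at most `Δ`, with `δ, Δ ∈ [0, 1/2]`, then
`(1/2 − δ)² + (1/2 − Δ)² ≤ 1/4`. -/
theorem heisenberg_general
    (ι₁ : (H →L[ℂ] H) →⋆ₐ[ℂ] (L →L[ℂ] L)) (ι₂ : (K →L[ℂ] K) →⋆ₐ[ℂ] (L →L[ℂ] L))
    (hcomm : ∀ X Y, ι₁ X * ι₂ Y = ι₂ Y * ι₁ X)
    (V : H →L[ℂ] L) (hV : adjoint V ∘L V = 1)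
    (Q : K →L[ℂ] K) (hQproj : IsIdempotentElem Q) (hQsa : IsSelfAdjoint Q)
    (E : H →L[ℂ] H) (hEproj : IsIdempotentElem E) (hEsa : IsSelfAdjoint E)
    (hE0 : E ≠ 0) (hE1 : E ≠ 1)
    (δ Δ : ℝ) (hδ : δ ∈ Set.Icc (0 : ℝ) (1 / 2)) (hΔ : Δ ∈ Set.Icc (0 : ℝ) (1 / 2))
    (hinfid : ‖qop V (ι₂ Q) - E‖ ≤ δ)
    (hdist : ∀ P : H →L[ℂ] H, IsIdempotentElem P → IsSelfAdjoint P →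
      ‖qop V (ι₁ P) - P‖ ≤ Δ) :
    (1 / 2 - δ) ^ 2 + (1 / 2 - Δ) ^ 2 ≤ 1 / 4 := by
  obtain ⟨hδ0, hδ2⟩ := hδ
  obtain ⟨hΔ0, hΔ2⟩ := hΔ
  -- V is an isometry on inner products
  have hViso : ∀ x y : H, ⟪V x, V y⟫ = ⟪x, y⟫ := by
    intro x y
    calc ⟪V x, V y⟫ = ⟪(adjoint V) (V x), y⟫ := (adjoint_inner_left V y (V x)).symm
      _ = ⟪(adjoint V ∘L V) x, y⟫ := rfl
      _ = ⟪x, y⟫ := by rw [hV]; simp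
  have hq : ∀ (X : L →L[ℂ] L) (x y : H), ⟪x, qop V X y⟫ = ⟪V x, X (V y)⟫ := by
    intro X x y
    exact adjoint_inner_right V x (X (V y))
  -- unit vectors ψ ∈ ran E, φ ∈ ker E
  obtain ⟨x₀, hx₀⟩ : ∃ x, E x ≠ 0 := by
    by_contra h; push_neg at h
    exact hE0 (ContinuousLinearMap.ext fun x => by simp [h x])
  obtain ⟨y₀, hy₀⟩ : ∃ x, E x ≠ x := by
    by_contra h; push_neg at h
    exact hE1 (ContinuousLinearMap.ext fun x => by simp [h x])
  have hEidem : ∀ v : H, E (E v) = E v := fun v => by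
    rw [← ContinuousLinearMap.mul_apply, hEproj.eq]
  set ψ : H := (‖E x₀‖ : ℂ)⁻¹ • E x₀ with hψdef
  set φ : H := (‖y₀ - E y₀‖ : ℂ)⁻¹ • (y₀ - E y₀) with hφdef
  have hsub0 : y₀ - E y₀ ≠ 0 := fun h => hy₀ (by rw [← sub_eq_zero]; rw [← neg_sub]; simp [h])
  have hψ1 : ‖ψ‖ = 1 := by
    rw [hψdef, norm_smul, norm_inv, Complex.norm_real, Real.norm_eq_abs, abs_norm]
    exact inv_mul_cancel₀ (norm_ne_zero_iff.mpr hx₀)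
  have hφ1 : ‖φ‖ = 1 := by
    rw [hφdef, norm_smul, norm_inv, Complex.norm_real, Real.norm_eq_abs, abs_norm]
    exact inv_mul_cancel₀ (norm_ne_zero_iff.mpr hsub0)
  have hEψ : E ψ = ψ := by rw [hψdef, map_smul, hEidem]
  have hEφ : E φ = 0 := by
    rw [hφdef, map_smul, map_sub, hEidem, sub_self, smul_zero]
  have hψφ : ⟪ψ, φ⟫ = 0 := by
    calc ⟪ψ, φ⟫ = ⟪E ψ, φ⟫ := by rw [hEψ]
      _ = ⟪(adjoint E) ψ, φ⟫ := by rw [hEsa.adjoint_eq]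
      _ = ⟪ψ, E φ⟫ := adjoint_inner_left E φ ψ
      _ = 0 := by rw [hEφ, inner_zero_right]
  have hφψ : ⟪φ, ψ⟫ = 0 := by rw [← inner_conj_symm, hψφ]; simp
  have hψψ : ⟪ψ, ψ⟫ = 1 := by
    rw [inner_self_eq_norm_sq_to_K, hψ1]; norm_num
  have hφφ : ⟪φ, φ⟫ = 1 := by
    rw [inner_self_eq_norm_sq_to_K, hφ1]; norm_num
  -- tilted vectors
  set r : ℝ := (Real.sqrt 2)⁻¹ with hrdef
  have hr : (r : ℂ) * (r : ℂ) = 1/2 := by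
    have h2 : Real.sqrt 2 * Real.sqrt 2 = 2 := Real.mul_self_sqrt (by norm_num)
    have h3 : r * r = 1/2 := by rw [hrdef, ← mul_inv, h2]; norm_num
    calc (r : ℂ) * (r : ℂ) = ((r * r : ℝ) : ℂ) := by push_cast; ring
      _ = 1/2 := by rw [h3]; norm_num
  set ξ : H := (r : ℂ) • (ψ + φ) with hξdef
  set ξ' : H := (r : ℂ) • (ψ - φ) with hξ'def
  have hψξ : ⟪ψ, ξ⟫ = (r : ℂ) := by
    simp only [hξdef, inner_smul_right, inner_add_right, hψψ, hψφ]
    ring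
  have hξφ : ⟪ξ, φ⟫ = (r : ℂ) := by
    simp only [hξdef, inner_smul_left, inner_add_left, hψφ, hφφ, Complex.conj_ofReal]
    ring
  have hψξ' : ⟪ψ, ξ'⟫ = (r : ℂ) := by
    simp only [hξ'def, inner_smul_right, inner_sub_right, hψψ, hψφ]
    ring
  have hξ'φ : ⟪ξ', φ⟫ = -(r : ℂ) := by
    simp only [hξ'def, inner_smul_left, inner_sub_left, hψφ, hφφ, Complex.conj_ofReal]
    ring
  have hξξ : ⟪ξ, ξ⟫ = 1 := by
    simp only [hξdef, inner_smul_left, inner_smul_right, inner_add_left, inner_add_right,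
      hψψ, hψφ, hφψ, hφφ, Complex.conj_ofReal]
    linear_combination 2 * hr
  have hξ'ξ' : ⟪ξ', ξ'⟫ = 1 := by
    simp only [hξ'def, inner_smul_left, inner_smul_right, inner_sub_left, inner_sub_right,
      hψψ, hψφ, hφψ, hφφ, Complex.conj_ofReal]
    linear_combination 2 * hr
  have hξξ' : ⟪ξ, ξ'⟫ = 0 := by
    simp only [hξdef, hξ'def, inner_smul_left, inner_smul_right, inner_add_left,
      inner_sub_right, hψψ, hψφ, hφψ, hφφ, Complex.conj_ofReal]
    ring
  have hξ'ξ : ⟪ξ', ξ⟫ = 0 := by rw [← inner_conj_symm, hξξ']; simp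
  have hξ1 : ‖ξ‖ = 1 := unit_of_inner ξ hξξ
  have hξ'1 : ‖ξ'‖ = 1 := unit_of_inner ξ' hξ'ξ'
  -- the vectors in L
  set a : L := V ψ with hadef
  set b : L := V φ with hbdef
  have ha1 : ‖a‖ = 1 := unit_of_inner a (by rw [hadef, hViso]; exact hψψ)
  have hb1 : ‖b‖ = 1 := unit_of_inner b (by rw [hbdef, hViso]; exact hφφ)
  set Y : L →L[ℂ] L := ι₂ Q with hYdef
  have hYsa : IsSelfAdjoint Y := hQsa.map ι₂
  have hYidem : IsIdempotentElem Y := by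
    unfold IsIdempotentElem
    rw [hYdef, ← map_mul, hQproj.eq]
  have hYv : ∀ v : L, Y (Y v) = Y v := fun v => by
    rw [← ContinuousLinearMap.mul_apply, hYidem.eq]
  -- the numbers A B C D
  set A : ℝ := ‖Y a‖ with hAdef
  set B : ℝ := ‖Y b‖ with hBdef
  set C : ℝ := ‖a - Y a‖ with hCdef
  set D : ℝ := ‖b - Y b‖ with hDdef
  have hAC : A^2 + C^2 = 1 := by
    have := proj_pyth Y hYidem hYsa a
    rw [hCdef, this, ha1]; ring
  have hBD : B^2 + D^2 = 1 := by
    have := proj_pyth Y hYidem hYsa b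
    rw [hDdef, this, hb1]; ring
  -- information bounds
  have habs : ∀ z : ℂ, |z.re| ≤ ‖z‖ := fun z => Complex.abs_re_le_norm z
  have hAδ : 1 - δ ≤ A^2 := by
    have h1 : ‖⟪ψ, (qop V Y - E) ψ⟫‖ ≤ δ := le_trans (inner_op_le hψ1 hψ1) hinfid
    have h2 : ⟪ψ, (qop V Y - E) ψ⟫ = ⟪ψ, qop V Y ψ⟫ - 1 := by
      rw [ContinuousLinearMap.sub_apply, inner_sub_right, hEψ, hψψ]
    have h3 : (⟪ψ, qop V Y ψ⟫).re = A^2 := by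
      rw [hq Y ψ ψ]
      exact inner_proj_re Y hYidem hYsa a
    have h4 := le_trans (habs _) h1
    rw [h2] at h4
    have h5 : (⟪ψ, qop V Y ψ⟫ - 1).re = A^2 - 1 := by
      rw [Complex.sub_re, h3]; norm_num
    rw [h5] at h4
    have := abs_le.mp h4
    linarith [this.1]
  have hBδ : B^2 ≤ δ := by
    have h1 : ‖⟪φ, (qop V Y - E) φ⟫‖ ≤ δ := le_trans (inner_op_le hφ1 hφ1) hinfid
    have h2 : ⟪φ, (qop V Y - E) φ⟫ = ⟪φ, qop V Y φ⟫ := by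
      rw [ContinuousLinearMap.sub_apply, inner_sub_right, hEφ, inner_zero_right, sub_zero]
    have h3 : (⟪φ, qop V Y φ⟫).re = B^2 := by
      rw [hq Y φ φ]
      exact inner_proj_re Y hYidem hYsa b
    rw [h2] at h1
    have h4 := le_trans (habs _) h1
    rw [h3] at h4
    have := abs_le.mp h4
    linarith [this.1]
  -- disturbance bounds
  set P₁ : H →L[ℂ] H := rankOne ξ with hP₁def
  set P₂ : H →L[ℂ] H := rankOne ξ' with hP₂def
  have hP₁idem := rankOne_idem ξ hξ1
  have hP₂idem := rankOne_idem ξ' hξ'1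
  have hP₁sa := rankOne_isSelfAdjoint ξ
  have hP₂sa := rankOne_isSelfAdjoint ξ'
  have hdist1 : 1/2 - Δ ≤ (⟪a, (ι₁ P₁) b⟫).re := by
    have h1 : ‖⟪ψ, (qop V (ι₁ P₁) - P₁) φ⟫‖ ≤ Δ :=
      le_trans (inner_op_le hψ1 hφ1) (hdist P₁ hP₁idem hP₁sa)
    have hval : ⟪ψ, P₁ φ⟫ = 1/2 := by
      rw [hP₁def, rankOne_apply, inner_smul_right, hξφ, hψξ, hr]
    have h2 : ⟪ψ, (qop V (ι₁ P₁) - P₁) φ⟫ = ⟪a, (ι₁ P₁) b⟫ - 1/2 := by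
      rw [ContinuousLinearMap.sub_apply, inner_sub_right, hval, hq]
    rw [h2] at h1
    have h4 := le_trans (habs _) h1
    have h5 : (⟪a, (ι₁ P₁) b⟫ - 1/2).re = (⟪a, (ι₁ P₁) b⟫).re - 1/2 := by
      rw [Complex.sub_re]; norm_num
    rw [h5] at h4
    have := abs_le.mp h4
    linarith [this.1]
  have hdist2 : (⟪a, (ι₁ P₂) b⟫).re ≤ -(1/2) + Δ := by
    have h1 : ‖⟪ψ, (qop V (ι₁ P₂) - P₂) φ⟫‖ ≤ Δ :=
      le_trans (inner_op_le hψ1 hφ1) (hdist P₂ hP₂idem hP₂sa)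
    have hval : ⟪ψ, P₂ φ⟫ = -(1/2) := by
      rw [hP₂def, rankOne_apply, inner_smul_right, hξ'φ, hψξ']
      rw [neg_mul, hr]
    have h2 : ⟪ψ, (qop V (ι₁ P₂) - P₂) φ⟫ = ⟪a, (ι₁ P₂) b⟫ + 1/2 := by
      rw [ContinuousLinearMap.sub_apply, inner_sub_right, hval, hq]
      ring
    rw [h2] at h1
    have h4 := le_trans (habs _) h1
    have h5 : (⟪a, (ι₁ P₂) b⟫ + 1/2).re = (⟪a, (ι₁ P₂) b⟫).re + 1/2 := by
      rw [Complex.add_re]; norm_num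
    rw [h5] at h4
    have := abs_le.mp h4
    linarith [(abs_le.mp h4).2]
  -- the swap operator W
  set W : L →L[ℂ] L := ι₁ P₁ - ι₁ P₂ with hWdef
  have key1 : 1 - 2*Δ ≤ (⟪a, W b⟫).re := by
    have h1 : ⟪a, W b⟫ = ⟪a, (ι₁ P₁) b⟫ - ⟪a, (ι₁ P₂) b⟫ := by
      rw [hWdef, ContinuousLinearMap.sub_apply, inner_sub_right]
    rw [h1, Complex.sub_re]
    linarith
  have hYW : Y * W = W * Y := by
    rw [hWdef, hYdef, mul_sub, sub_mul, hcomm, hcomm]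
  have hYWv : ∀ v : L, Y (W v) = W (Y v) := fun v => by
    rw [← ContinuousLinearMap.mul_apply, ← ContinuousLinearMap.mul_apply, hYW]
  have hWsa : IsSelfAdjoint W := (hP₁sa.map ι₁).sub (hP₂sa.map ι₁)
  have hWnorm : ‖W‖ ≤ 1 := by
    have hsum_idem : IsIdempotentElem (P₁ + P₂) := by
      unfold IsIdempotentElem
      rw [mul_add, add_mul, add_mul, hP₁idem.eq, hP₂idem.eq,
        rankOne_orth ξ ξ' hξξ', rankOne_orth ξ' ξ hξ'ξ]
      abel
    have hsum_sa : IsSelfAdjoint (P₁ + P₂) := hP₁sa.add hP₂sa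
    have hWW : W * W = ι₁ (P₁ + P₂) := by
      rw [hWdef, ← map_sub, ← map_mul]
      congr 1
      rw [mul_sub, sub_mul, sub_mul, hP₁idem.eq, hP₂idem.eq,
        rankOne_orth ξ ξ' hξξ', rankOne_orth ξ' ξ hξ'ξ]
      abel
    have hιidem : IsIdempotentElem (ι₁ (P₁ + P₂)) := by
      unfold IsIdempotentElem
      rw [← map_mul, hsum_idem.eq]
    have hιsa : IsSelfAdjoint (ι₁ (P₁ + P₂)) := hsum_sa.map ι₁
    have hnorm1 : ‖ι₁ (P₁ + P₂)‖ ≤ 1 := sa_idem_norm_le_one _ hιidem hιsa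
    have h2 : ‖W‖ * ‖W‖ ≤ 1 := by
      calc ‖W‖ * ‖W‖ = ‖star W * W‖ := (CStarRing.norm_star_mul_self).symm
        _ = ‖W * W‖ := by rw [hWsa.star_eq]
        _ = ‖ι₁ (P₁ + P₂)‖ := by rw [hWW]
        _ ≤ 1 := hnorm1
    nlinarith [norm_nonneg W]
  -- adjoint moves for Y
  have hYadj : ∀ u v : L, ⟪Y u, v⟫ = ⟪u, Y v⟫ := fun u v => by
    conv_lhs => rw [← hYsa.adjoint_eq]
    exact adjoint_inner_left Y v u
  -- split identity
  have hsplit : ⟪a, W b⟫ = ⟪Y a, W (Y b)⟫ + ⟪a - Y a, W (b - Y b)⟫ := by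
    have t1 : ⟪Y a, W (Y b)⟫ = ⟪a, W (Y b)⟫ := by
      rw [hYadj, hYWv, hYv]
    have t2 : ⟪Y a, W (b - Y b)⟫ = 0 := by
      rw [hYadj, hYWv]
      have : Y (b - Y b) = 0 := by rw [map_sub, hYv, sub_self]
      rw [this, map_zero, inner_zero_right]
    have t3 : ⟪a - Y a, W (b - Y b)⟫ = ⟪a, W b⟫ - ⟪a, W (Y b)⟫ := by
      rw [inner_sub_left, t2, sub_zero, map_sub, inner_sub_right]
    rw [t1, t3]
    ring
  -- norm bound on the split
  have hbound : (⟪a, W b⟫).re ≤ A*B + C*D := by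
    have e1 : ‖⟪Y a, W (Y b)⟫‖ ≤ A * B := by
      calc ‖⟪Y a, W (Y b)⟫‖ ≤ ‖Y a‖ * ‖W (Y b)‖ := norm_inner_le_norm _ _
        _ ≤ ‖Y a‖ * (‖W‖ * ‖Y b‖) := by gcongr; exact le_opNorm W (Y b)
        _ ≤ ‖Y a‖ * (1 * ‖Y b‖) := by
            gcongr
        _ = A * B := by rw [one_mul]
    have e2 : ‖⟪a - Y a, W (b - Y b)⟫‖ ≤ C * D := by
      calc ‖⟪a - Y a, W (b - Y b)⟫‖ ≤ ‖a - Y a‖ * ‖W (b - Y b)‖ := norm_inner_le_norm _ _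
        _ ≤ ‖a - Y a‖ * (‖W‖ * ‖b - Y b‖) := by gcongr; exact le_opNorm W (b - Y b)
        _ ≤ ‖a - Y a‖ * (1 * ‖b - Y b‖) := by gcongr
        _ = C * D := by rw [one_mul]
    calc (⟪a, W b⟫).re ≤ ‖⟪a, W b⟫‖ := le_trans (le_abs_self _) (habs _)
      _ = ‖⟪Y a, W (Y b)⟫ + ⟪a - Y a, W (b - Y b)⟫‖ := by rw [← hsplit]
      _ ≤ ‖⟪Y a, W (Y b)⟫‖ + ‖⟪a - Y a, W (b - Y b)⟫‖ := norm_add_le _ _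
      _ ≤ A*B + C*D := add_le_add e1 e2
  exact real_final A B C D δ Δ (norm_nonneg _) (norm_nonneg _) (norm_nonneg _)
    (norm_nonneg _) hAC hBD hAδ hBδ hδ2 hΔ2 (by linarith)
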